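/- Let T1 and T2 be full binary trees with n internal nodes each, let r = ⌈log₂ n⌉ + 1, let T_B be the complete binary tree of height r, and for i ∈ {1,2} let T_i' be the tree obtained from T_B by replacing its leftmost leaf with the tree T_i. Then rank(T_1') = rank(T_2') = r, and for every k ∈ ℕ, d(T1, T2) ≤ k if and only if d_R(T_1', T_2') ≤ k. -/
import Mathlib


/-- Full binary trees: every node is a leaf or has exactly two children.
`node l r` is an internal node with left subtree `l` and right subtree `r`. -/
inductive FBT : Type
  | leaf : FBT
  | node : FBT → FBT → FBT
  deriving DecidableEq

namespace FBT

/-- Number of internal nodes. -/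
def internal : FBT → ℕ
  | leaf => 0
  | node l r => internal l + internal r + 1

/-- Height: maximum number of internal nodes on a root-to-leaf path. -/
def height : FBT → ℕ
  | leaf => 0
  | node l r => max (height l) (height r) + 1

/-- Rank of a full binary tree (Ehrenfeucht–Haussler rank). -/
def rank : FBT → ℕ
  | leaf => 0
  | node l r => if rank l = rank r then rank l + 1 else max (rank l) (rank r)

/-- A full binary tree is skew if every internal node has at least one leaf child. -/
def skew : FBT → Prop
  | leaf => True
  | node l r => (l = leaf ∨ r = leaf) ∧ skew l ∧ skew r

/-- Pre-order traversal of the internal nodes, labeled by the in-order labeling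
(1-indexed); `off` is the number of in-order labels used strictly to the left
of this subtree.  `T.preorderAux 0` is the tree permutation of `T`, as a list. -/
def preorderAux : FBT → ℕ → List ℕ
  | leaf, _ => []
  | node l r, off =>
      (off + internal l + 1) :: (preorderAux l off ++ preorderAux r (off + internal l + 1))

/-- Number of internal nodes on the rightmost root-to-leaf path. -/
def rightPath : FBT → ℕ
  | leaf => 0
  | node _ r => rightPath r + 1

end FBT

/-- One (left or right) rotation, performed at some node of the tree. -/
inductive Rot : FBT → FBT → Prop
  | rotR (C D E : FBT) : Rot (FBT.node (FBT.node C D) E) (FBT.node C (FBT.node D E))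
  | rotL (C D E : FBT) : Rot (FBT.node C (FBT.node D E)) (FBT.node (FBT.node C D) E)
  | congrL {l l' : FBT} (r : FBT) : Rot l l' → Rot (FBT.node l r) (FBT.node l' r)
  | congrR {r r' : FBT} (l : FBT) : Rot r r' → Rot (FBT.node l r) (FBT.node l r')

/-- `RotChainP P k T1 T2`: there is a sequence of `k` rotations transforming `T1`
into `T2` in which every tree reached along the way satisfies `P`. -/
def RotChainP (P : FBT → Prop) : ℕ → FBT → FBT → Prop
  | 0, T1, T2 => T1 = T2
  | k+1, T1, T2 => ∃ T, Rot T1 T ∧ P T ∧ RotChainP P k T T2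

/-- `RotChain k T1 T2`: `T1` can be transformed into `T2` by `k` rotations. -/
def RotChain : ℕ → FBT → FBT → Prop := RotChainP fun _ => True

/-- The rotation distance between two full binary trees. -/
noncomputable def rotDist (T1 T2 : FBT) : ℕ := sInf {k | RotChain k T1 T2}

/-- The right comb on `n` internal nodes. -/
def rightComb : ℕ → FBT
  | 0 => FBT.leaf
  | n+1 => FBT.node FBT.leaf (rightComb n)

/-- The left comb on `n` internal nodes. -/
def leftComb : ℕ → FBT
  | 0 => FBT.leaf
  | n+1 => FBT.node (leftComb n) FBT.leaf

/-- The complete binary tree of height `r`. -/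
def completeTree : ℕ → FBT
  | 0 => FBT.leaf
  | r+1 => FBT.node (completeTree r) (completeTree r)

/-- Replace the leftmost leaf of the first tree by the second tree. -/
def attachLeftmost : FBT → FBT → FBT
  | FBT.leaf, S => S
  | FBT.node l r, S => FBT.node (attachLeftmost l S) r

/-- The transposition `δ_{i,j,k}` (1-indexed, `1 ≤ i < j < k`) applied to a list:
the consecutive blocks occupying positions `i..j-1` and `j..k-1` are swapped,
all other positions are left fixed. -/
def transposeList (i j k : ℕ) (l : List ℕ) : List ℕ :=
  l.take (i-1) ++ (l.drop (j-1)).take (k-j) ++ (l.drop (i-1)).take (j-i) ++ l.drop (k-1)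

/-- `δ_{i,j,k}` is a tree transposition (on permutations of `n` elements): there are
full binary trees `T1, T2` with `n` internal nodes each, at rotation distance `1`,
whose tree permutations `σ, τ` satisfy `δ_{i,j,k}(σ) = τ`. -/
def IsTreeTransposition (n i j k : ℕ) : Prop :=
  ∃ T1 T2 : FBT, T1.internal = n ∧ T2.internal = n ∧ rotDist T1 T2 = 1 ∧
    transposeList i j k (T1.preorderAux 0) = T2.preorderAux 0

/-- `σ` (a permutation of `Fin n`) is a tree permutation: the pre-order traversal of
some full binary tree with `n` internal nodes under the in-order labeling.
(Positions and values are converted to 1-indexed labels.) -/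
def IsTreePerm (n : ℕ) (σ : Equiv.Perm (Fin n)) : Prop :=
  ∃ T : FBT, T.internal = n ∧ T.preorderAux 0 = List.ofFn fun i => (σ i : ℕ) + 1

/-- `σ` is a skew permutation: the tree permutation of some full skew tree. -/
def IsSkewPerm (n : ℕ) (σ : Equiv.Perm (Fin n)) : Prop :=
  ∃ T : FBT, T.internal = n ∧ T.skew ∧ T.preorderAux 0 = List.ofFn fun i => (σ i : ℕ) + 1

/-- `SkewSim σ τ` (written `σ ∼ τ` in the paper): `τ` is obtained from `σ` (lists,
0-indexed) by a skew transposition: for some position `i`, `σ(i)` and `σ(i+1)` are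
respectively the min and the max (or the max and the min) of the suffix starting at
position `i`, and `τ` is `σ` with the entries at positions `i` and `i+1` swapped. -/
def SkewSim (σ τ : List ℕ) : Prop :=
  ∃ i : ℕ, i + 1 < σ.length ∧
    (((∀ x ∈ σ.drop i, σ.getD i 0 ≤ x) ∧ (∀ x ∈ σ.drop i, x ≤ σ.getD (i+1) 0)) ∨
     ((∀ x ∈ σ.drop i, x ≤ σ.getD i 0) ∧ (∀ x ∈ σ.drop i, σ.getD (i+1) 0 ≤ x))) ∧
    τ = σ.take i ++ [σ.getD (i+1) 0, σ.getD i 0] ++ σ.drop (i+2)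

/-- The tree polynomial of a full binary tree: the sum over all leaves of `x^a y^b`,
where `a` (resp. `b`) is the number of left (resp. right) edges on the root-to-leaf
path.  `X 0` plays the role of `x` and `X 1` the role of `y`. -/
noncomputable def treePoly : FBT → MvPolynomial (Fin 2) ℕ
  | FBT.leaf => 1
  | FBT.node l r => MvPolynomial.X 0 * treePoly l + MvPolynomial.X 1 * treePoly r

section Aux

open FBT

/-- Rotations preserve the number of internal nodes. -/
lemma Rot.internal_eq {S S' : FBT} (h : Rot S S') : S.internal = S'.internal := by
  induction h with
  | rotR C D E => simp [FBT.internal]; omega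
  | rotL C D E => simp [FBT.internal]; omega
  | congrL r h ih => simp [FBT.internal, ih]
  | congrR l h ih => simp [FBT.internal, ih]

/-- A rotation never involves a leaf. -/
lemma Rot.ne_leaf {S S' : FBT} (h : Rot S S') : S ≠ FBT.leaf ∧ S' ≠ FBT.leaf := by
  cases h <;> exact ⟨by simp, by simp⟩

lemma two_pow_rank_le (T : FBT) : 2 ^ T.rank ≤ T.internal + 1 := by
  induction T with
  | leaf => simp [FBT.rank, FBT.internal]
  | node l r ihl ihr =>
      simp only [FBT.rank, FBT.internal]
      split
      · next h =>
        rw [h] at ihl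
        rw [h, pow_succ]
        omega
      · rcases max_cases l.rank r.rank with ⟨hm, _⟩ | ⟨hm, _⟩ <;> rw [hm] <;> omega

lemma rank_le_clog {T : FBT} {n : ℕ} (hn : 1 ≤ n) (h : T.internal = n) :
    T.rank ≤ Nat.clog 2 n + 1 := by
  have h1 := two_pow_rank_le T
  have h2 : n ≤ 2 ^ Nat.clog 2 n := Nat.le_pow_clog one_lt_two n
  have h3 : 2 ^ T.rank ≤ 2 ^ (Nat.clog 2 n + 1) := by
    rw [pow_succ]; omega
  exact (Nat.pow_le_pow_iff_right one_lt_two).mp h3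

lemma rank_completeTree (k : ℕ) : (completeTree k).rank = k := by
  induction k with
  | zero => simp [completeTree, FBT.rank]
  | succ k ih => simp [completeTree, FBT.rank, ih]

lemma rank_attach_le_rank {T : FBT} : ∀ k, k ≤ T.rank →
    (attachLeftmost (completeTree k) T).rank = T.rank := by
  intro k
  induction k with
  | zero => intro _; simp [completeTree, attachLeftmost]
  | succ k ih =>
      intro hk
      have h1 : (attachLeftmost (completeTree k) T).rank = T.rank := ih (by omega)
      simp only [completeTree, attachLeftmost, FBT.rank, h1, rank_completeTree]
      have : T.rank ≠ k := by omega
      simp [this]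
      omega

lemma rank_attach {T : FBT} : ∀ m, T.rank ≤ m →
    (attachLeftmost (completeTree m) T).rank = m := by
  intro m
  induction m with
  | zero => intro h; simp [completeTree, attachLeftmost]; omega
  | succ m ih =>
      intro hm
      rcases Nat.lt_or_ge T.rank (m+1) with h | h
      · have h1 := ih (by omega)
        simp [completeTree, attachLeftmost, FBT.rank, h1, rank_completeTree]
      · have h1 : T.rank = m + 1 := by omega
        have := rank_attach_le_rank (T := T) (m+1) (by omega)
        rw [this, h1]

/-- A rotation lifts through `attachLeftmost`. -/
lemma Rot.attach {T T' : FBT} (C : FBT) (h : Rot T T') :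
    Rot (attachLeftmost C T) (attachLeftmost C T') := by
  induction C with
  | leaf => exact h
  | node l r ihl => exact Rot.congrL r ihl

/-- Delete the rightmost leaf (and its parent). -/
def delR : FBT → FBT
  | FBT.leaf => FBT.leaf
  | FBT.node l FBT.leaf => l
  | FBT.node l (FBT.node a b) => FBT.node l (delR (FBT.node a b))

lemma delR_attach (C T : FBT) (hC : C ≠ FBT.leaf) :
    delR (attachLeftmost C T) = attachLeftmost (delR C) T := by
  cases C with
  | leaf => exact absurd rfl hC
  | node l r =>
      cases r with
      | leaf => simp [attachLeftmost, delR]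
      | node a b => simp [attachLeftmost, delR]

lemma internal_delR (C : FBT) (hC : C ≠ FBT.leaf) :
    (delR C).internal + 1 = C.internal := by
  induction C with
  | leaf => exact absurd rfl hC
  | node l r ihl ihr =>
      cases r with
      | leaf => simp [delR, FBT.internal]
      | node a b =>
          have := ihr (by simp)
          simp [delR, FBT.internal] at this ⊢
          omega

lemma internal_eq_zero {C : FBT} (h : C.internal = 0) : C = FBT.leaf := by
  cases C with
  | leaf => rfl
  | node l r => simp [FBT.internal] at h

lemma delR_iter : ∀ (N : ℕ) (C T : FBT), C.internal = N →
    delR^[N] (attachLeftmost C T) = T := by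
  intro N
  induction N with
  | zero => intro C T h; rw [internal_eq_zero h]; simp [attachLeftmost]
  | succ N ih =>
      intro C T h
      have hC : C ≠ FBT.leaf := by
        intro hc; rw [hc] at h; simp [FBT.internal] at h
      rw [Function.iterate_succ_apply, delR_attach C T hC]
      exact ih _ T (by have := internal_delR C hC; omega)

/-- Key projection lemma: a rotation projects to a rotation or the identity. -/
lemma delR_rot {S S' : FBT} (h : Rot S S') :
    delR S = delR S' ∨ Rot (delR S) (delR S') := by
  induction h with
  | rotR C D E =>
      cases E with
      | leaf => left; simp [delR]
      | node a b => right; simp only [delR]; exact Rot.rotR C D (delR (FBT.node a b))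
  | rotL C D E =>
      cases E with
      | leaf => left; simp [delR]
      | node a b => right; simp only [delR]; exact Rot.rotL C D (delR (FBT.node a b))
  | congrL r h ih =>
      cases r with
      | leaf => right; simpa [delR] using h
      | node a b => right; simp only [delR]; exact Rot.congrL _ h
  | congrR l h ih =>
      next r r' =>
      obtain ⟨hr, hr'⟩ := h.ne_leaf
      cases r with
      | leaf => exact absurd rfl hr
      | node a b =>
          cases r' with
          | leaf => exact absurd rfl hr'
          | node a' b' =>
              rcases ih with heq | hrot
              · left; simp only [delR]; rw [heq]
              · right; simp only [delR]; exact Rot.congrR l hrot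

lemma delR_iter_rot {S S' : FBT} (h : Rot S S') (N : ℕ) :
    delR^[N] S = delR^[N] S' ∨ Rot (delR^[N] S) (delR^[N] S') := by
  induction N generalizing S S' with
  | zero => right; exact h
  | succ N ih =>
      rw [Function.iterate_succ_apply, Function.iterate_succ_apply]
      rcases delR_rot h with heq | hrot
      · left; rw [heq]
      · exact ih hrot

lemma chain_proj {P : FBT → Prop} (N : ℕ) : ∀ (m : ℕ) (S S' : FBT),
    RotChainP P m S S' → ∃ m' ≤ m, RotChain m' (delR^[N] S) (delR^[N] S') := by
  intro m
  induction m with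
  | zero =>
      intro S S' h
      exact ⟨0, le_refl 0, by rw [show S = S' from h]; rfl⟩
  | succ m ih =>
      intro S S' h
      obtain ⟨T, hrot, _, hchain⟩ := h
      obtain ⟨m', hm', hc⟩ := ih T S' hchain
      rcases delR_iter_rot hrot N with heq | hrot'
      · exact ⟨m', by omega, by rw [heq]; exact hc⟩
      · exact ⟨m' + 1, by omega, ⟨delR^[N] T, hrot', trivial, hc⟩⟩

lemma chain_attach' {P : FBT → Prop} (C : FBT) (n : ℕ)
    (hP : ∀ U : FBT, U.internal = n → P (attachLeftmost C U)) :
    ∀ (m : ℕ) (T T' : FBT), T.internal = n → RotChain m T T' →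
      RotChainP P m (attachLeftmost C T) (attachLeftmost C T') := by
  intro m
  induction m with
  | zero =>
      intro T T' _ h
      rw [show T = T' from h]; rfl
  | succ m ih =>
      intro T T' hT h
      obtain ⟨U, hrot, _, hchain⟩ := h
      have hU : U.internal = n := by rw [← hrot.internal_eq]; exact hT
      exact ⟨attachLeftmost C U, hrot.attach C, hP U hU, ih U T' hU hchain⟩

end Aux
/-- attaching each `T_i` (with `n` internal nodes) at the leftmost leaf
of the complete binary tree of height `r = ⌈log₂ n⌉ + 1` produces trees `T_i'` of rank
exactly `r`, and `d(T1,T2) ≤ k` iff `d_R(T1',T2') ≤ k` for every `k`. -/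
theorem rotdist_reduces_to_rank_bounded (n : ℕ) (hn : 1 ≤ n) (T1 T2 : FBT)
    (h1 : T1.internal = n) (h2 : T2.internal = n) :
    (attachLeftmost (completeTree (Nat.clog 2 n + 1)) T1).rank = Nat.clog 2 n + 1 ∧
    (attachLeftmost (completeTree (Nat.clog 2 n + 1)) T2).rank = Nat.clog 2 n + 1 ∧
    ∀ k : ℕ,
      (∃ m ≤ k, RotChain m T1 T2) ↔
      (∃ m ≤ k, RotChainP
        (fun S => S.rank ≤
          max (attachLeftmost (completeTree (Nat.clog 2 n + 1)) T1).rank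
              (attachLeftmost (completeTree (Nat.clog 2 n + 1)) T2).rank)
        m
        (attachLeftmost (completeTree (Nat.clog 2 n + 1)) T1)
        (attachLeftmost (completeTree (Nat.clog 2 n + 1)) T2)) := by
  have hrank1 : T1.rank ≤ Nat.clog 2 n + 1 := rank_le_clog hn h1
  have hrank2 : T2.rank ≤ Nat.clog 2 n + 1 := rank_le_clog hn h2
  have e1 : (attachLeftmost (completeTree (Nat.clog 2 n + 1)) T1).rank = Nat.clog 2 n + 1 :=
    rank_attach _ hrank1
  have e2 : (attachLeftmost (completeTree (Nat.clog 2 n + 1)) T2).rank = Nat.clog 2 n + 1 :=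
    rank_attach _ hrank2
  refine ⟨e1, e2, fun k => ⟨?_, ?_⟩⟩
  · rintro ⟨m, hm, hc⟩
    refine ⟨m, hm, ?_⟩
    apply chain_attach' (completeTree (Nat.clog 2 n + 1)) n _ m T1 T2 h1 hc
    intro U hU
    rw [rank_attach _ (rank_le_clog hn hU), e1, e2, max_self]
  · rintro ⟨m, hm, hc⟩
    obtain ⟨m', hm', hc'⟩ := chain_proj (completeTree (Nat.clog 2 n + 1)).internal m _ _ hc
    rw [delR_iter _ _ T1 rfl, delR_iter _ _ T2 rfl] at hc'
    exact ⟨m', le_trans hm' hm, hc'⟩
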